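/- For a positive definite matrix Σ with index set partitioned into a and b, the regression coefficient block satisfies (Π_{a|b.cd} Π_{a|c.bd}) = −(Σ^{aa})⁻¹(Σ^{ab} Σ^{ac}), where Σ^{xy} are blocks of the concentration matrix Σ⁻¹ under a finer partition (a,b,c,d). -/

import Mathlib

open Matrix

variable {n : ℕ}

/-- The submatrix (block) of `S` with rows `x` and columns `y`. -/
def blk (S : Matrix (Fin n) (Fin n) ℝ) (x y : Finset (Fin n)) : Matrix x y ℝ :=
  Matrix.of fun i j => S i j

/-- The conditional covariance block `Σ_{xy|z} = Σ_{xy} − Σ_{xz} Σ_{zz}⁻¹ Σ_{zy}`. -/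
noncomputable def condCov (S : Matrix (Fin n) (Fin n) ℝ) (x y z : Finset (Fin n)) :
    Matrix x y ℝ :=
  blk S x y - blk S x z * (blk S z z)⁻¹ * blk S z y

/-- The partial regression coefficient matrix `Π_{x|y.z} = Σ_{xy|z} Σ_{yy|z}⁻¹`. -/
noncomputable def regCoef (S : Matrix (Fin n) (Fin n) ℝ) (x y z : Finset (Fin n)) :
    Matrix x y ℝ :=
  condCov S x y z * (condCov S y y z)⁻¹

section Aux
set_option linter.unusedSectionVars false

variable {l m : Type*} [Fintype l] [Fintype m] [DecidableEq l] [DecidableEq m]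

theorem posDef_submatrix_of_injective {M : Matrix m m ℝ} (hM : M.PosDef) {e : l → m}
    (he : Function.Injective e) : (M.submatrix e e).PosDef := by
  refine posDef_iff_dotProduct_mulVec.mpr ⟨hM.1.submatrix e, fun x hx => ?_⟩
  set y : m → ℝ := Function.extend e x 0 with hy
  have hyk : ∀ k, (∀ i, e i ≠ k) → y k = 0 := by
    intro k hk
    rw [hy, Function.extend_apply' _ _ _ (fun ⟨i, hik⟩ => hk i hik)]
    rfl
  have hsumL : ∀ g : m → ℝ, ∑ k, g k * y k = ∑ i, g (e i) * x i := by
    intro g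
    have h1 : ∑ k ∈ Finset.univ.image e, g k * y k = ∑ i, g (e i) * y (e i) :=
      Finset.sum_image (fun p _ q _ h => he h)
    have h2 : ∑ k, g k * y k = ∑ k ∈ Finset.univ.image e, g k * y k := by
      refine (Finset.sum_subset (Finset.subset_univ _) ?_).symm
      intro k _ hk
      rw [hyk k (fun i hik => hk (Finset.mem_image.mpr ⟨i, Finset.mem_univ _, hik⟩)), mul_zero]
    rw [h2, h1]
    refine Finset.sum_congr rfl fun i _ => ?_
    rw [hy, he.extend_apply]
  have hy0 : y ≠ 0 := by
    obtain ⟨i, hi⟩ := Function.ne_iff.mp hx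
    refine Function.ne_iff.mpr ⟨e i, ?_⟩
    rw [hy, he.extend_apply]
    simpa using hi
  have key : star x ⬝ᵥ (M.submatrix e e) *ᵥ x = star y ⬝ᵥ M *ᵥ y := by
    simp only [dotProduct, mulVec, star_trivial, Pi.star_apply, submatrix_apply]
    calc ∑ i, x i * ∑ j, M (e i) (e j) * x j
        = ∑ i, (∑ j, M (e i) (e j) * x j) * x i := by
          refine Finset.sum_congr rfl fun i _ => mul_comm _ _
      _ = ∑ k, (∑ j, M k (e j) * x j) * y k :=
          (hsumL (fun k => ∑ j, M k (e j) * x j)).symm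
      _ = ∑ k, y k * ∑ j, M k (e j) * x j := by
          refine Finset.sum_congr rfl fun k _ => mul_comm _ _
      _ = ∑ k, y k * ∑ j, M k j * y j := by
          refine Finset.sum_congr rfl fun k _ => ?_
          congr 1
          exact (hsumL fun j => M k j).symm
  rw [key]
  exact hM.dotProduct_mulVec_pos hy0

theorem inv_fromBlocks_of_posDef {A : Matrix l l ℝ} {B : Matrix l m ℝ} {C : Matrix m l ℝ}
    {D : Matrix m m ℝ} (h : (fromBlocks A B C D).PosDef) :
    IsUnit (A - B * D⁻¹ * C) ∧
      (fromBlocks A B C D)⁻¹ =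
        fromBlocks (A - B * D⁻¹ * C)⁻¹ (-((A - B * D⁻¹ * C)⁻¹ * B * D⁻¹))
          (-(D⁻¹ * C * (A - B * D⁻¹ * C)⁻¹))
          (D⁻¹ + D⁻¹ * C * (A - B * D⁻¹ * C)⁻¹ * B * D⁻¹) := by
  have hD : D.PosDef := by
    have := posDef_submatrix_of_injective h (Sum.inr_injective (α := l) (β := m))
    have heq : (fromBlocks A B C D).submatrix (Sum.inr : m → l ⊕ m) Sum.inr = D := by
      ext i j; rfl
    rwa [heq] at this
  letI := hD.isUnit.invertible
  letI := h.isUnit.invertible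
  letI iS := invertibleOfFromBlocks₂₂Invertible A B C D
  have hDinv : (⅟D : Matrix m m ℝ) = D⁻¹ := invOf_eq_nonsing_inv D
  letI iS' : Invertible (A - B * D⁻¹ * C) := hDinv ▸ iS
  refine ⟨isUnit_of_invertible _, ?_⟩
  have h2 := invOf_fromBlocks₂₂_eq A B C D
  simp only [invOf_eq_nonsing_inv, hDinv] at h2
  exact h2

theorem submatrix_id_mul {o : Type*} [Fintype o] (X : Matrix l m ℝ) (Y : Matrix m o ℝ)
    {p : Type*} (f : p → o) :
    (X * Y).submatrix id f = X * Y.submatrix id f := by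
  ext i j
  simp [Matrix.mul_apply]

theorem mul_split {o p q : Type*} [Fintype o] [Fintype p] (U : Matrix l (o ⊕ p) ℝ)
    (V : Matrix (o ⊕ p) q ℝ) :
    U * V = U.submatrix id Sum.inl * V.submatrix Sum.inl id
      + U.submatrix id Sum.inr * V.submatrix Sum.inr id := by
  ext i j
  simp [Matrix.mul_apply, Fintype.sum_sum_type]

end Aux

theorem regCoef_main (S : Matrix (Fin n) (Fin n) ℝ) (hS : S.PosDef)
    (a b z : Finset (Fin n)) (hab : Disjoint a b) (haz : Disjoint a z) (hbz : Disjoint b z)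
    (hcover : a ∪ b ∪ z = Finset.univ) :
    regCoef S a b z = -((blk S⁻¹ a a)⁻¹ * blk S⁻¹ a b) := by
  classical
  set g : ↥b ⊕ ↥z → Fin n := Sum.elim Subtype.val Subtype.val with hg
  set f : ↥a ⊕ (↥b ⊕ ↥z) → Fin n := Sum.elim Subtype.val g with hf
  have hginj : Function.Injective g := by
    rintro (⟨i, hi⟩ | ⟨i, hi⟩) (⟨j, hj⟩ | ⟨j, hj⟩) hij <;>
      simp only [hg, Sum.elim_inl, Sum.elim_inr] at hij <;> subst hij
    · rfl
    · exact absurd hj (Finset.disjoint_left.mp hbz hi)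
    · exact absurd hi (Finset.disjoint_left.mp hbz hj)
    · rfl
  have hfinj : Function.Injective f := by
    rintro (⟨i, hi⟩ | u) (⟨j, hj⟩ | v) hij
    · simp only [hf, Sum.elim_inl] at hij; subst hij; rfl
    · exfalso
      rcases v with ⟨j, hj⟩ | ⟨j, hj⟩ <;>
        simp only [hf, hg, Sum.elim_inl, Sum.elim_inr] at hij <;> subst hij
      · exact absurd hj (Finset.disjoint_left.mp hab hi)
      · exact absurd hj (Finset.disjoint_left.mp haz hi)
    · exfalso
      rcases u with ⟨i, hi⟩ | ⟨i, hi⟩ <;>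
        simp only [hf, hg, Sum.elim_inl, Sum.elim_inr] at hij <;> subst hij
      · exact absurd hi (Finset.disjoint_left.mp hab hj)
      · exact absurd hi (Finset.disjoint_left.mp haz hj)
    · simp only [hf, Sum.elim_inr] at hij
      rw [hginj hij]
  have hfsurj : Function.Surjective f := by
    intro i
    have : i ∈ a ∪ b ∪ z := hcover ▸ Finset.mem_univ i
    rcases Finset.mem_union.mp this with h' | hz'
    · rcases Finset.mem_union.mp h' with ha' | hb'
      · exact ⟨Sum.inl ⟨i, ha'⟩, rfl⟩
      · exact ⟨Sum.inr (Sum.inl ⟨i, hb'⟩), rfl⟩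
    · exact ⟨Sum.inr (Sum.inr ⟨i, hz'⟩), rfl⟩
  let E : (↥a ⊕ (↥b ⊕ ↥z)) ≃ Fin n := Equiv.ofBijective f ⟨hfinj, hfsurj⟩
  set A' : Matrix ↥a ↥a ℝ := blk S a a with hA'
  set Bm : Matrix ↥a (↥b ⊕ ↥z) ℝ := S.submatrix Subtype.val g with hBm
  set Cm : Matrix (↥b ⊕ ↥z) ↥a ℝ := S.submatrix g Subtype.val with hCm
  set Nm : Matrix (↥b ⊕ ↥z) (↥b ⊕ ↥z) ℝ := S.submatrix g g with hNm
  have hM : S.submatrix f f = fromBlocks A' Bm Cm Nm := by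
    ext (i | (i | i)) (j | (j | j)) <;> rfl
  have hMpd : (fromBlocks A' Bm Cm Nm).PosDef := by
    rw [← hM]; exact posDef_submatrix_of_injective hS hfinj
  obtain ⟨hT, hMinv⟩ := inv_fromBlocks_of_posDef hMpd
  set T : Matrix ↥a ↥a ℝ := A' - Bm * Nm⁻¹ * Cm with hTdef
  -- Nm block structure
  have hNblocks : Nm = fromBlocks (blk S b b) (blk S b z) (blk S z b) (blk S z z) := by
    ext (i | i) (j | j) <;> rfl
  have hNpd : (fromBlocks (blk S b b) (blk S b z) (blk S z b) (blk S z z)).PosDef := by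
    rw [← hNblocks]; exact posDef_submatrix_of_injective hS hginj
  obtain ⟨hW, hNinv⟩ := inv_fromBlocks_of_posDef hNpd
  have hWc : blk S b b - blk S b z * (blk S z z)⁻¹ * blk S z b = condCov S b b z := rfl
  rw [hWc] at hW hNinv
  set W : Matrix ↥b ↥b ℝ := condCov S b b z with hWdef
  -- inverse transported
  have hinv : S⁻¹.submatrix f f = (fromBlocks A' Bm Cm Nm)⁻¹ := by
    rw [← hM]
    exact (Matrix.inv_submatrix_equiv S E E).symm
  -- identify the blocks of S⁻¹
  have haa : blk S⁻¹ a a = T⁻¹ := by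
    have h1 : blk S⁻¹ a a = (S⁻¹.submatrix f f).toBlocks₁₁ := rfl
    rw [h1, hinv, hMinv]
    rfl
  have hab' : blk S⁻¹ a b = (-(T⁻¹ * Bm * Nm⁻¹)).submatrix id Sum.inl := by
    have h1 : blk S⁻¹ a b = ((S⁻¹.submatrix f f).toBlocks₁₂).submatrix id Sum.inl := rfl
    rw [h1, hinv, hMinv]
    rfl
  have hTdet : IsUnit T.det := Matrix.isUnit_iff_isUnit_det T |>.mp hT
  have hTT : (T⁻¹)⁻¹ = T := Matrix.nonsing_inv_nonsing_inv T hTdet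
  rw [haa, hab', hTT]
  have hneg : (-(T⁻¹ * Bm * Nm⁻¹)).submatrix id Sum.inl
      = -((T⁻¹ * Bm * Nm⁻¹).submatrix id Sum.inl) := by
    ext i j; simp
  rw [hneg, Matrix.mul_assoc T⁻¹, submatrix_id_mul, submatrix_id_mul, Matrix.mul_neg, neg_neg,
    ← Matrix.mul_assoc, ← Matrix.mul_assoc, Matrix.mul_nonsing_inv T hTdet, Matrix.one_mul]
  -- now goal : regCoef S a b z = Bm * Nm⁻¹.submatrix id Sum.inl
  rw [mul_split Bm (Nm⁻¹.submatrix id Sum.inl)]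
  have e1 : Bm.submatrix id Sum.inl = blk S a b := rfl
  have e2 : Bm.submatrix id Sum.inr = blk S a z := rfl
  have e3 : (Nm⁻¹.submatrix id Sum.inl).submatrix Sum.inl id = W⁻¹ := by
    ext i j
    have : Nm⁻¹ (Sum.inl i) (Sum.inl j) = W⁻¹ i j := by rw [hNblocks, hNinv]; rfl
    simpa using this
  have e4 : (Nm⁻¹.submatrix id Sum.inl).submatrix Sum.inr id
      = -((blk S z z)⁻¹ * blk S z b * W⁻¹) := by
    ext i j
    have : Nm⁻¹ (Sum.inr i) (Sum.inl j) = (-((blk S z z)⁻¹ * blk S z b * W⁻¹)) i j := by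
      rw [hNblocks, hNinv]; rfl
    simpa using this
  rw [e1, e2, e3, e4]
  show condCov S a b z * W⁻¹ = _
  rw [show condCov S a b z = blk S a b - blk S a z * (blk S z z)⁻¹ * blk S z b from rfl]
  simp only [Matrix.sub_mul, sub_eq_add_neg, Matrix.add_mul, Matrix.neg_mul, Matrix.mul_neg, Matrix.mul_assoc]


/-- `(Π_{a|b.cd}  Π_{a|c.bd}) = −(Σ^{aa})⁻¹ (Σ^{ab}  Σ^{ac})`,
where `Σ^{xy}` are blocks of the concentration matrix `Σ⁻¹` under the
partition `(a,b,c,d)` of the full index set. -/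
theorem regCoef_concentration (S : Matrix (Fin n) (Fin n) ℝ) (hS : S.PosDef)
    (a b c d : Finset (Fin n))
    (hab : Disjoint a b) (hac : Disjoint a c) (had : Disjoint a d)
    (hbc : Disjoint b c) (hbd : Disjoint b d) (hcd : Disjoint c d)
    (hcover : a ∪ b ∪ c ∪ d = Finset.univ) :
    regCoef S a b (c ∪ d) = -((blk S⁻¹ a a)⁻¹ * blk S⁻¹ a b) ∧
      regCoef S a c (b ∪ d) = -((blk S⁻¹ a a)⁻¹ * blk S⁻¹ a c) := by
  constructor
  · refine regCoef_main S hS a b (c ∪ d) hab ?_ ?_ ?_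
    · exact Finset.disjoint_union_right.mpr ⟨hac, had⟩
    · exact Finset.disjoint_union_right.mpr ⟨hbc, hbd⟩
    · rw [← Finset.union_assoc]; exact hcover
  · refine regCoef_main S hS a c (b ∪ d) hac ?_ ?_ ?_
    · exact Finset.disjoint_union_right.mpr ⟨hab, had⟩
    · exact Finset.disjoint_union_right.mpr ⟨hbc.symm, hcd⟩
    · have h : a ∪ c ∪ (b ∪ d) = a ∪ b ∪ c ∪ d := by
        ext x; simp only [Finset.mem_union]; tauto
      rw [h]; exact hcover
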